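/- arXiv:2601.21466 — 4 statements merged into one kernel-verified Lean document; each statement's English description precedes it below -/
import Mathlib

section
/- The right ideal I = ⟨(q+1)²⟩ generated by (q+1)^{*2} = (q+1)² in the ring (ℍ[q], +, *) is quasi prime: whenever P*Q ∈ I for P, Q ∈ ℍ[q], either P ∈ I or Q^s ∈ I. -/
/-- The quaternions ℍ. -/
abbrev Hq : Type := Quaternion ℝ

/-- A right ideal of a (possibly noncommutative) ring. -/
structure RightIdeal (R : Type) [Ring R] where
  carrier : Set R
  zero_mem : (0 : R) ∈ carrier
  add_mem : ∀ {x y : R}, x ∈ carrier → y ∈ carrier → x + y ∈ carrier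
  mul_mem_right : ∀ {x : R} (y : R), x ∈ carrier → x * y ∈ carrier

/-- The right ideal generated by a set. -/
def RightIdeal.span {R : Type} [Ring R] (s : Set R) : RightIdeal R where
  carrier := {x | ∀ I : RightIdeal R, s ⊆ I.carrier → x ∈ I.carrier}
  zero_mem := fun I _ => I.zero_mem
  add_mem := fun hx hy I hs => I.add_mem (hx I hs) (hy I hs)
  mul_mem_right := fun y hx I hs => I.mul_mem_right y (hx I hs)

/-- The regular conjugate `P^c` of a one-variable slice regular polynomial `P = Σ q^ℓ a_ℓ`,
namely `P^c = Σ q^ℓ (conj a_ℓ)`.  (The ring ℍ[q] with the slice product coincides with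
`Polynomial Hq` with its usual multiplication.) -/
noncomputable def pconj (P : Polynomial Hq) : Polynomial Hq :=
  ∑ k ∈ P.support, Polynomial.X ^ k * Polynomial.C (star (P.coeff k))

/-- The symmetrization `P^s = P * P^c`. -/
noncomputable def psymm (P : Polynomial Hq) : Polynomial Hq := P * pconj P

/-- A right ideal `I` is quasi prime if `P*Q ∈ I` implies `P ∈ I` or `Q^s ∈ I`. -/
def QuasiPrime (I : RightIdeal (Polynomial Hq)) : Prop :=
  ∀ P Q : Polynomial Hq, P * Q ∈ I.carrier → P ∈ I.carrier ∨ psymm Q ∈ I.carrier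

/-- A right ideal `I` is completely prime if `P*Q ∈ I` and `P*I ⊆ I` imply
`P ∈ I` or `Q ∈ I`. -/
def CompletelyPrime (I : RightIdeal (Polynomial Hq)) : Prop :=
  ∀ P Q : Polynomial Hq, P * Q ∈ I.carrier → (∀ R ∈ I.carrier, P * R ∈ I.carrier) →
    P ∈ I.carrier ∨ Q ∈ I.carrier

/-- The (right) radical `√I`: the intersection of all completely prime right ideals
containing `I`. -/
def radicalSet (I : RightIdeal (Polynomial Hq)) : Set (Polynomial Hq) :=
  ⋂ J ∈ {J : RightIdeal (Polynomial Hq) | CompletelyPrime J ∧ I.carrier ⊆ J.carrier}, J.carrier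

open Polynomial

lemma mem_span_iff {R : Type} [Ring R] (g P : R) :
    P ∈ (RightIdeal.span {g}).carrier ↔ g ∣ P := by
  constructor
  · intro h
    exact h ⟨{x | g ∣ x}, dvd_zero g, fun hx hy => dvd_add hx hy,
      fun y hx => hx.mul_right y⟩ (by simp)
  · rintro ⟨r, rfl⟩ I hs
    exact I.mul_mem_right r (hs rfl)

lemma pconj_coeff (P : Polynomial Hq) (n : ℕ) : (pconj P).coeff n = star (P.coeff n) := by
  unfold pconj
  rw [finset_sum_coeff]
  by_cases hn : n ∈ P.support
  · rw [Finset.sum_eq_single n]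
    · simp [← C_mul_X_pow_eq_monomial, (commute_X (C (star (P.coeff n)))).pow_right n]
    · intro b _ hbn
      simp [← C_mul_X_pow_eq_monomial, (commute_X (C (star (P.coeff b)))).pow_right n,
        coeff_C_mul, coeff_X_pow, Ne.symm hbn]
    · intro h; exact absurd hn h
  · have h0 : P.coeff n = 0 := notMem_support_iff.mp hn
    rw [h0, star_zero]
    apply Finset.sum_eq_zero
    intro b hb
    have hbn : b ≠ n := fun h => hn (h ▸ hb)
    simp [← C_mul_X_pow_eq_monomial, (commute_X (C (star (P.coeff b)))).pow_right n,
      coeff_C_mul, coeff_X_pow, Ne.symm hbn]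

lemma pconj_real_mul (A B : Polynomial Hq)
    (hA : ∀ k, star (A.coeff k) = A.coeff k ∧ ∀ x : Hq, Commute (A.coeff k) x) :
    pconj (A * B) = A * pconj B := by
  apply Polynomial.ext
  intro n
  rw [pconj_coeff, coeff_mul, coeff_mul, star_sum]
  apply Finset.sum_congr rfl
  intro p _
  rw [star_mul, pconj_coeff, (hA p.1).1, ((hA p.1).2 (star (B.coeff p.2))).eq]

noncomputable abbrev cp : Polynomial Hq := Polynomial.X + 1

lemma cp_monic : cp.Monic := by
  have := monic_X_add_C (1 : Hq)
  simpa using this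

lemma cp_commute (p : Polynomial Hq) : Commute cp p := by
  unfold Commute SemiconjBy
  rw [add_mul, mul_add, X_mul, one_mul, mul_one]

lemma cp_not_dvd_mul {P Q : Polynomial Hq} (hP : ¬ cp ∣ P) (hQ : ¬ cp ∣ Q) :
    ¬ cp ∣ P * Q := by
  intro hPQ
  have hdeg : cp.degree = 1 := by simpa using degree_X_add_C (1 : Hq)
  have hmod : ∀ {W : Polynomial Hq}, ¬ cp ∣ W →
      ∃ (a : Hq) (A : Polynomial Hq), a ≠ 0 ∧ W = cp * A + C a := by
    intro W hW
    have hlt : (W %ₘ cp).degree < 1 := hdeg ▸ degree_modByMonic_lt W cp_monic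
    have hle : (W %ₘ cp).degree ≤ 0 := Nat.WithBot.lt_one_iff_le_zero.mp hlt
    have hrC : W %ₘ cp = C ((W %ₘ cp).coeff 0) := eq_C_of_degree_le_zero hle
    refine ⟨(W %ₘ cp).coeff 0, W /ₘ cp, ?_, ?_⟩
    · intro h0
      apply hW
      rw [← modByMonic_eq_zero_iff_dvd cp_monic, hrC, h0, map_zero]
    · rw [← hrC, add_comm]
      exact (modByMonic_add_div W cp).symm
  obtain ⟨a, A, ha, hPa⟩ := hmod hP
  obtain ⟨b, B, hb, hQb⟩ := hmod hQ
  have h2 : C a * (cp * B + C b) = cp * (C a * B) + C a * C b := by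
    rw [mul_add, ← mul_assoc, ← (cp_commute (C a)).eq, mul_assoc]
  have h3 : C a * Q = cp * (C a * B) + C a * C b := by rw [hQb]; exact h2
  have key : P * Q = cp * (A * Q + C a * B) + C (a * b) := by
    rw [C_mul, hPa, add_mul, h3, mul_add, add_assoc, mul_assoc]
  obtain ⟨r, hr⟩ := hPQ
  have hC : C (a * b) = cp * (r - (A * Q + C a * B)) := by
    rw [mul_sub, ← hr, key]
    exact (add_sub_cancel_left _ _).symm
  have hab : (a * b : Hq) ≠ 0 := mul_ne_zero ha hb
  have hCne : C (a * b) ≠ 0 := by simpa using hab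
  have hnd : cp.natDegree = 1 := natDegree_eq_of_degree_eq_some hdeg
  exact (cp_monic.not_dvd_of_natDegree_lt hCne (by rw [natDegree_C, hnd]; norm_num)) ⟨_, hC⟩

lemma cp_pow_coeff_prop (n : ℕ) : ∀ k, star ((cp ^ n).coeff k) = (cp ^ n).coeff k ∧
    ∀ x : Hq, Commute ((cp ^ n).coeff k) x := by
  intro k
  have h : (cp ^ n).coeff k = (n.choose k : Hq) := coeff_X_add_one_pow Hq n k
  rw [h]
  exact ⟨star_natCast _, fun x => Nat.cast_commute _ x⟩


/-- The right ideal `⟨(q+1)²⟩` of ℍ[q] is quasi prime. -/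
theorem span_sq_quasiPrime :
    QuasiPrime (RightIdeal.span {((Polynomial.X + 1 : Polynomial Hq)) ^ 2}) := by
  intro P Q hPQ
  rw [mem_span_iff] at hPQ
  by_cases hP0 : P = 0
  · left; rw [mem_span_iff, hP0]; exact dvd_zero _
  by_cases hQ0 : Q = 0
  · right; rw [mem_span_iff]
    have h0 : psymm Q = 0 := by rw [psymm, hQ0, zero_mul]
    rw [h0]; exact dvd_zero _
  have hXC : (X : Polynomial Hq) - C (-1) = cp := by rw [C_neg, C_1, sub_neg_eq_add]
  obtain ⟨P₁, hP1, hP1nd⟩ := exists_eq_pow_rootMultiplicity_mul_and_not_dvd P hP0 (-1)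
  obtain ⟨Q₁, hQ1, hQ1nd⟩ := exists_eq_pow_rootMultiplicity_mul_and_not_dvd Q hQ0 (-1)
  rw [hXC] at hP1 hP1nd hQ1 hQ1nd
  set m := P.rootMultiplicity (-1) with hm'
  set n := Q.rootMultiplicity (-1) with hn'
  by_cases hn : 1 ≤ n
  · right
    rw [mem_span_iff, psymm, hQ1, pconj_real_mul _ _ (cp_pow_coeff_prop n)]
    have hcomm : Q₁ * cp ^ n = cp ^ n * Q₁ := (((cp_commute Q₁).pow_left n).eq).symm
    have hre : cp ^ n * Q₁ * (cp ^ n * pconj Q₁) = cp ^ (n + n) * (Q₁ * pconj Q₁) := by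
      rw [mul_assoc, ← mul_assoc Q₁, hcomm, mul_assoc, ← mul_assoc, ← pow_add]
    rw [hre]
    exact Dvd.dvd.mul_right (pow_dvd_pow cp (by omega)) _
  · have hn0 : n = 0 := by omega
    rw [hn0, pow_zero, one_mul] at hQ1
    by_cases hm : 2 ≤ m
    · left
      rw [mem_span_iff, hP1]
      exact (pow_dvd_pow cp hm).mul_right _
    · exfalso
      obtain ⟨R, hR⟩ := hPQ
      have hm2 : m + (2 - m) = 2 := by omega
      have h1 : cp ^ m * (P₁ * Q₁) = cp ^ m * (cp ^ (2 - m) * R) := by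
        rw [← mul_assoc, ← hP1, ← hQ1, hR, ← mul_assoc, ← pow_add, hm2]
      have hsub : cp ^ m * (P₁ * Q₁ - cp ^ (2 - m) * R) = 0 := by
        rw [mul_sub, h1, sub_self]
      have hcancel : P₁ * Q₁ = cp ^ (2 - m) * R :=
        sub_eq_zero.mp ((cp_monic.pow m).mul_right_eq_zero_iff.mp hsub)
      have hdvd : cp ∣ P₁ * Q₁ :=
        by rw [hcancel]; exact ((dvd_pow_self cp (by omega : 2 - m ≠ 0)).mul_right R)
      exact cp_not_dvd_mul hP1nd hQ1nd hdvd
end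

section
/- Let I = ⟨(q+1)³⟩ be the right ideal generated by (q+1)³ in the ring (ℍ[q], +, *). Then √I = ⟨q+1⟩, the right ideal generated by q+1. -/
open Polynomial

/-- Evaluation at `-1` as a ring hom on `Hq[X]`. -/
noncomputable def evm : Polynomial Hq →+* Hq :=
  Polynomial.eval₂RingHom' (RingHom.id Hq) (-1) (fun a => Commute.neg_one_right a)

lemma evm_X_add_one : evm (Polynomial.X + 1) = 0 := by
  simp [evm, Polynomial.eval₂RingHom']

lemma monic_X_add_one : (Polynomial.X + 1 : Polynomial Hq).Monic := by
  simpa using Polynomial.monic_X_add_C (1 : Hq)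

/-- The kernel of `evm` as a right ideal. -/
noncomputable def Kev : RightIdeal (Polynomial Hq) where
  carrier := {P | evm P = 0}
  zero_mem := evm.map_zero
  add_mem := fun hx hy => by
    show evm _ = 0
    rw [evm.map_add, hx, hy, add_zero]
  mul_mem_right := fun y hx => by
    show evm _ = 0
    rw [evm.map_mul, hx, zero_mul]

lemma mem_span_of_evm_zero {P : Polynomial Hq} (h : evm P = 0) :
    P ∈ (RightIdeal.span {(Polynomial.X + 1 : Polynomial Hq)}).carrier := by
  intro J hJ
  have hX1 : (Polynomial.X + 1 : Polynomial Hq) ∈ J.carrier := hJ rfl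
  have hdecomp := Polynomial.modByMonic_add_div P (Polynomial.X + 1 : Polynomial Hq)
  set r := P %ₘ (Polynomial.X + 1) with hr
  have hdeg : r.degree < (Polynomial.X + 1 : Polynomial Hq).degree :=
    Polynomial.degree_modByMonic_lt P monic_X_add_one
  have hdeg1 : (Polynomial.X + 1 : Polynomial Hq).degree = 1 := by
    simpa using Polynomial.degree_X_add_C (1 : Hq)
  have hrC : r = Polynomial.C (r.coeff 0) :=
    Polynomial.eq_C_of_degree_le_zero (by
      rw [hdeg1] at hdeg
      exact Nat.WithBot.lt_one_iff_le_zero.mp hdeg)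
  have hev : evm r = 0 := by
    have : evm r + evm (Polynomial.X + 1) * evm (P /ₘ (Polynomial.X + 1)) = evm P := by
      rw [← evm.map_mul, ← evm.map_add, hdecomp]
    rw [← this, evm_X_add_one, zero_mul, add_zero] at h
    exact h
  have hr0 : r = 0 := by
    rw [hrC] at hev ⊢
    have : r.coeff 0 = 0 := by simpa [evm, Polynomial.eval₂RingHom'] using hev
    rw [this, Polynomial.C_0]
  have : P = (Polynomial.X + 1) * (P /ₘ (Polynomial.X + 1)) := by
    conv_lhs => rw [← hdecomp]
    rw [hr0, zero_add]
  rw [this]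
  exact J.mul_mem_right _ hX1

lemma Kev_completelyPrime : CompletelyPrime Kev := by
  intro P Q hPQ _
  have : evm P * evm Q = 0 := by rw [← evm.map_mul]; exact hPQ
  rcases mul_eq_zero.mp this with h | h
  · exact Or.inl h
  · exact Or.inr h

/-- For `I = ⟨(q+1)³⟩` in ℍ[q], the radical is `√I = ⟨q+1⟩`. -/
theorem radical_span_cube :
    radicalSet (RightIdeal.span {((Polynomial.X + 1 : Polynomial Hq)) ^ 3}) =
      (RightIdeal.span {(Polynomial.X + 1 : Polynomial Hq)}).carrier := by
  apply Set.Subset.antisymm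
  · -- radical ⊆ span{X+1}
    intro x hx
    have hcube : ((Polynomial.X + 1 : Polynomial Hq)) ^ 3 ∈ Kev.carrier := by
      show evm _ = 0
      rw [evm.map_pow, evm_X_add_one, zero_pow (by norm_num)]
    have hsub : (RightIdeal.span {((Polynomial.X + 1 : Polynomial Hq)) ^ 3}).carrier
        ⊆ Kev.carrier := fun y hy => hy Kev (by simpa using hcube)
    have hxK : x ∈ Kev.carrier := by
      simp only [radicalSet, Set.mem_iInter] at hx
      exact hx Kev ⟨Kev_completelyPrime, hsub⟩
    exact mem_span_of_evm_zero hxK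
  · -- span{X+1} ⊆ radical
    intro x hx
    simp only [radicalSet, Set.mem_iInter]
    rintro J ⟨hJcp, hJsub⟩
    -- X+1 commutes with everything
    have hcomm : ∀ R : Polynomial Hq, (Polynomial.X + 1) * R = R * (Polynomial.X + 1) := by
      intro R
      rw [add_mul, mul_add, Polynomial.X_mul, one_mul, mul_one]
    have hstable : ∀ R ∈ J.carrier, (Polynomial.X + 1 : Polynomial Hq) * R ∈ J.carrier := by
      intro R hR
      rw [hcomm]
      exact J.mul_mem_right _ hR
    have hcubeJ : ((Polynomial.X + 1 : Polynomial Hq)) ^ 3 ∈ J.carrier :=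
      hJsub (fun K hK => hK rfl)
    have hprod : (Polynomial.X + 1 : Polynomial Hq) * ((Polynomial.X + 1) ^ 2) ∈ J.carrier := by
      rw [← pow_succ']
      exact hcubeJ
    have hX1J : (Polynomial.X + 1 : Polynomial Hq) ∈ J.carrier := by
      rcases hJcp _ _ hprod hstable with h | h
      · exact h
      · have hprod2 : (Polynomial.X + 1 : Polynomial Hq) * (Polynomial.X + 1) ∈ J.carrier := by
          rw [← sq]; exact h
        rcases hJcp _ _ hprod2 hstable with h2 | h2 <;> exact h2
    exact hx J (by simpa using hX1J)
end

section
/- The right ideal ⟨q+1⟩ generated by q+1 in the ring (ℍ[q], +, *) is a maximal right ideal, and it is quasi prime. -/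
noncomputable def phi : Polynomial Hq →+* Hq :=
  Polynomial.eval₂RingHom' (RingHom.id Hq) (-1) (fun a => Commute.neg_one_right a)

lemma phi_X_add_one : phi (Polynomial.X + 1) = 0 := by
  simp [phi]

noncomputable def Jker : RightIdeal (Polynomial Hq) where
  carrier := {x | phi x = 0}
  zero_mem := by simp
  add_mem := fun {x y} hx hy => by
    have hx' : phi x = 0 := hx
    have hy' : phi y = 0 := hy
    show phi (x + y) = 0
    rw [phi.map_add, hx', hy', add_zero]
  mul_mem_right := fun {x} y hx => by
    have hx' : phi x = 0 := hx
    show phi (x * y) = 0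
    rw [phi.map_mul, hx', zero_mul]

lemma mem_span_iff_s13 (P : Polynomial Hq) :
    P ∈ (RightIdeal.span {(Polynomial.X + 1 : Polynomial Hq)}).carrier ↔ phi P = 0 := by
  have hmonic : (Polynomial.X + 1 : Polynomial Hq).Monic := by
    simpa using Polynomial.monic_X_add_C (1 : Hq)
  have hdec := Polynomial.modByMonic_add_div P (Polynomial.X + 1)
  have hdeg : (P %ₘ (Polynomial.X + 1)).degree ≤ 0 := by
    apply Nat.WithBot.lt_one_iff_le_zero.mp
    have := Polynomial.degree_modByMonic_lt P hmonic
    rwa [show (1 : Polynomial Hq) = Polynomial.C 1 from Polynomial.C_1.symm,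
      Polynomial.degree_X_add_C] at this
  have hC := Polynomial.eq_C_of_degree_le_zero hdeg
  constructor
  · intro h
    exact h Jker (by
      intro x hx
      simp only [Set.mem_singleton_iff] at hx
      subst hx
      exact phi_X_add_one)
  · intro h I hI
    have hcoeff : (P %ₘ (Polynomial.X + 1)).coeff 0 = 0 := by
      have := congrArg phi hdec
      rw [phi.map_add, phi.map_mul, phi_X_add_one, zero_mul, add_zero, h] at this
      rw [hC] at this
      simpa [phi] using this
    have hmod0 : P %ₘ (Polynomial.X + 1) = 0 := by rw [hC, hcoeff]; simp
    have hP : P = (Polynomial.X + 1) * (P /ₘ (Polynomial.X + 1)) := by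
      conv_lhs => rw [← hdec]
      rw [hmod0, zero_add]
    rw [hP]
    exact I.mul_mem_right _ (hI rfl)

/-- The right ideal `⟨q+1⟩` of ℍ[q] is a maximal right ideal, and it is quasi prime. -/
theorem span_linear_maximal_quasiPrime :
    ((RightIdeal.span {(Polynomial.X + 1 : Polynomial Hq)}).carrier ≠ Set.univ ∧
      ∀ J : RightIdeal (Polynomial Hq),
        (RightIdeal.span {(Polynomial.X + 1 : Polynomial Hq)}).carrier ⊂ J.carrier →
          J.carrier = Set.univ) ∧
    QuasiPrime (RightIdeal.span {(Polynomial.X + 1 : Polynomial Hq)}) := by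
  refine ⟨⟨?_, ?_⟩, ?_⟩
  · intro h
    have h1 : (1 : Polynomial Hq) ∈ (RightIdeal.span {(Polynomial.X + 1 : Polynomial Hq)}).carrier := by
      rw [h]; trivial
    rw [mem_span_iff_s13] at h1
    simp [phi] at h1
  · intro J hJ
    have hsub := hJ.subset
    obtain ⟨P, hPJ, hPs⟩ := Set.exists_of_ssubset hJ
    rw [mem_span_iff_s13] at hPs
    set c := phi P with hc
    -- P - (X+1)*(P /ₘ (X+1)) = C c ∈ J
    have hmonic : (Polynomial.X + 1 : Polynomial Hq).Monic := by
      simpa using Polynomial.monic_X_add_C (1 : Hq)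
    have hdec := Polynomial.modByMonic_add_div P (Polynomial.X + 1)
    have hdeg : (P %ₘ (Polynomial.X + 1)).degree ≤ 0 := by
      apply Nat.WithBot.lt_one_iff_le_zero.mp
      have := Polynomial.degree_modByMonic_lt P hmonic
      rwa [show (1 : Polynomial Hq) = Polynomial.C 1 from Polynomial.C_1.symm,
        Polynomial.degree_X_add_C] at this
    have hCeq := Polynomial.eq_C_of_degree_le_zero hdeg
    have hcoeff : (P %ₘ (Polynomial.X + 1)).coeff 0 = c := by
      have := congrArg phi hdec
      rw [phi.map_add, phi.map_mul, phi_X_add_one, zero_mul, add_zero, ← hc] at this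
      rw [hCeq] at this
      simpa [phi] using this
    have hmodJ : (Polynomial.C c : Polynomial Hq) ∈ J.carrier := by
      have h1 : ((Polynomial.X + 1) * (P /ₘ (Polynomial.X + 1)) : Polynomial Hq) ∈ J.carrier := by
        apply hsub
        rw [mem_span_iff_s13, phi.map_mul, phi_X_add_one, zero_mul]
      have h2 : ((Polynomial.X + 1) * (P /ₘ (Polynomial.X + 1)) * (-1) : Polynomial Hq) ∈ J.carrier :=
        J.mul_mem_right _ h1
      have := J.add_mem hPJ h2
      have heq : P + (Polynomial.X + 1) * (P /ₘ (Polynomial.X + 1)) * (-1) = Polynomial.C c := by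
        have h3 : P %ₘ (Polynomial.X + 1) =
            P - (Polynomial.X + 1) * (P /ₘ (Polynomial.X + 1)) :=
          eq_sub_iff_add_eq.mpr hdec
        rw [mul_neg_one, ← sub_eq_add_neg, ← h3, hCeq, hcoeff]
      rwa [heq] at this
    have h1J : (1 : Polynomial Hq) ∈ J.carrier := by
      have := J.mul_mem_right (Polynomial.C c⁻¹) hmodJ
      rwa [← Polynomial.C_mul, mul_inv_cancel₀ hPs, Polynomial.C_1] at this
    ext x
    simp only [Set.mem_univ, iff_true]
    have := J.mul_mem_right x h1J
    rwa [one_mul] at this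
  · intro P Q hPQ
    rw [mem_span_iff_s13, phi.map_mul] at hPQ
    rcases mul_eq_zero.mp hPQ with h | h
    · left; rw [mem_span_iff_s13]; exact h
    · right; rw [mem_span_iff_s13, psymm, phi.map_mul, h, zero_mul]
end

section
/- The right ideal I = ⟨(q+1)³⟩ generated by (q+1)³ in the ring (ℍ[q], +, *) is not quasi prime: one has (q+1)² * (q+1) ∈ I, but (q+1)² ∉ I and (q+1)^s = (q+1)² ∉ I. -/
/-- The set of left multiples of `g` forms a right ideal. -/
noncomputable def divIdeal (g : Polynomial Hq) : RightIdeal (Polynomial Hq) where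
  carrier := {x | ∃ r, x = g * r}
  zero_mem := ⟨0, (mul_zero g).symm⟩
  add_mem := by rintro x y ⟨r, rfl⟩ ⟨s, rfl⟩; exact ⟨r + s, (mul_add g r s).symm⟩
  mul_mem_right := by rintro x y ⟨r, rfl⟩; exact ⟨r * y, mul_assoc g r y⟩

lemma X_add_one_ne_zero : (Polynomial.X + 1 : Polynomial Hq) ≠ 0 :=
  (Polynomial.monic_X_add_C (1 : Hq)).ne_zero ∘ (by simpa using ·)

lemma natDegree_X_add_one : (Polynomial.X + 1 : Polynomial Hq).natDegree = 1 := by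
  simpa using Polynomial.natDegree_X_add_C (1 : Hq)

lemma sq_not_mem :
    ((Polynomial.X + 1 : Polynomial Hq)) ^ 2 ∉
      (RightIdeal.span {((Polynomial.X + 1 : Polynomial Hq)) ^ 3}).carrier := by
  intro h
  obtain ⟨r, hr⟩ := h (divIdeal ((Polynomial.X + 1) ^ 3))
    (by rintro x rfl; exact ⟨1, (mul_one _).symm⟩)
  have h2 : ((Polynomial.X + 1 : Polynomial Hq)) ^ 2 ≠ 0 := pow_ne_zero _ X_add_one_ne_zero
  have h3 : ((Polynomial.X + 1 : Polynomial Hq)) ^ 3 ≠ 0 := pow_ne_zero _ X_add_one_ne_zero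
  have hrne : r ≠ 0 := by rintro rfl; exact h2 (by simpa using hr)
  have := congrArg Polynomial.natDegree hr
  rw [Polynomial.natDegree_mul h3 hrne, Polynomial.natDegree_pow,
    Polynomial.natDegree_pow, natDegree_X_add_one] at this
  omega

lemma pconj_X_add_one : pconj (Polynomial.X + 1 : Polynomial Hq) = Polynomial.X + 1 := by
  unfold pconj
  have hc : ∀ k, star ((Polynomial.X + 1 : Polynomial Hq).coeff k)
      = (Polynomial.X + 1 : Polynomial Hq).coeff k := by
    intro k
    simp only [Polynomial.coeff_add, Polynomial.coeff_X, Polynomial.coeff_one]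
    split_ifs <;> simp
  calc ∑ k ∈ (Polynomial.X + 1 : Polynomial Hq).support,
        Polynomial.X ^ k * Polynomial.C (star ((Polynomial.X + 1 : Polynomial Hq).coeff k))
      = ∑ k ∈ (Polynomial.X + 1 : Polynomial Hq).support,
        Polynomial.monomial k ((Polynomial.X + 1 : Polynomial Hq).coeff k) := by
        refine Finset.sum_congr rfl fun k _ => ?_
        rw [hc, Polynomial.X_pow_mul, ← Polynomial.C_mul_X_pow_eq_monomial]
    _ = Polynomial.X + 1 := (Polynomial.as_sum_support _).symm

/-- The right ideal `I = ⟨(q+1)³⟩` of ℍ[q] is not quasi prime: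
`(q+1)² * (q+1) ∈ I`, but `(q+1)² ∉ I` and `(q+1)^s = (q+1)² ∉ I`. -/
theorem span_cube_not_quasiPrime :
    ((Polynomial.X + 1 : Polynomial Hq)) ^ 2 * (Polynomial.X + 1) ∈
      (RightIdeal.span {((Polynomial.X + 1 : Polynomial Hq)) ^ 3}).carrier ∧
    ((Polynomial.X + 1 : Polynomial Hq)) ^ 2 ∉
      (RightIdeal.span {((Polynomial.X + 1 : Polynomial Hq)) ^ 3}).carrier ∧
    psymm (Polynomial.X + 1 : Polynomial Hq) = ((Polynomial.X + 1 : Polynomial Hq)) ^ 2 ∧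
    psymm (Polynomial.X + 1 : Polynomial Hq) ∉
      (RightIdeal.span {((Polynomial.X + 1 : Polynomial Hq)) ^ 3}).carrier ∧
    ¬ QuasiPrime (RightIdeal.span {((Polynomial.X + 1 : Polynomial Hq)) ^ 3}) := by
  have hmem : ((Polynomial.X + 1 : Polynomial Hq)) ^ 2 * (Polynomial.X + 1) ∈
      (RightIdeal.span {((Polynomial.X + 1 : Polynomial Hq)) ^ 3}).carrier := by
    intro I hs
    have : ((Polynomial.X + 1 : Polynomial Hq)) ^ 3 ∈ I.carrier := hs rfl
    simpa [pow_succ] using this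
  have hps : psymm (Polynomial.X + 1 : Polynomial Hq)
      = ((Polynomial.X + 1 : Polynomial Hq)) ^ 2 := by
    rw [psymm, pconj_X_add_one, sq]
  refine ⟨hmem, sq_not_mem, hps, hps ▸ sq_not_mem, fun hq => ?_⟩
  rcases hq _ _ hmem with h | h
  · exact sq_not_mem h
  · exact (hps ▸ sq_not_mem) h
end
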